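/- Let P be a real polynomial of degree n ≥ 1 with positive leading coefficient and only simple real negative zeros x_n < ⋯ < x_1 < 0. Let s > 0, α > 0 with s - α - n > 0, and P̂(x) = x(1-x)P'(x) + (x(s-α)+α)P(x). Then P̂ has n+1 simple real negative zeros x̂_{n+1} < ⋯ < x̂_1 < 0 which strictly interlace with those of P: x̂_{n+1} < x_n < x̂_n < ⋯ < x_1 < x̂_1 < 0. -/

import Mathlib

open Polynomial

lemma aux_prod_neg_sign {ι : Type*} (s : Finset ι) (f : ι → ℝ)
    (h : ∀ i ∈ s, f i < 0) : 0 < (-1 : ℝ) ^ s.card * ∏ i ∈ s, f i := by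
  induction s using Finset.cons_induction with
  | empty => simp
  | cons a s ha ih =>
    rw [Finset.prod_cons, Finset.card_cons, pow_succ]
    have h1 := ih (fun i hi => h i (Finset.mem_cons_of_mem hi))
    have h2 := h a (Finset.mem_cons_self _ _)
    nlinarith

set_option maxHeartbeats 1000000 in
theorem stmt_5 (n : ℕ) (hn : 1 ≤ n) (c : ℝ) (hc : 0 < c) (x : Fin n → ℝ)
    (hxneg : ∀ i, x i < 0) (hxmono : ∀ i j : Fin n, i < j → x j < x i)
    (s α : ℝ) (hs : 0 < s) (hα : 0 < α) (hsan : 0 < s - α - n)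
    (P Q : Polynomial ℝ) (hP : P = C c * ∏ i, (X - C (x i)))
    (hQ : Q = X * (1 - X) * P.derivative + (C (s - α) * X + C α) * P) :
    Q.natDegree = n + 1 ∧
    ∃ xh : Fin (n + 1) → ℝ,
      Q = C Q.leadingCoeff * ∏ i, (X - C (xh i)) ∧
      (∀ i j : Fin (n + 1), i < j → xh j < xh i) ∧
      xh 0 < 0 ∧
      (∀ i : Fin n, xh i.succ < x i ∧ x i < xh i.castSucc) := by
  classical
  obtain ⟨m, rfl⟩ : ∃ m, n = m + 1 := ⟨n - 1, by omega⟩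
  -- Step A : degree facts about P
  have hmono : ∀ i ∈ Finset.univ, (X - C (x i)).Monic := fun i _ => monic_X_sub_C (x i)
  have hmonicprod : (∏ i : Fin (m+1), (X - C (x i))).Monic :=
    monic_prod_of_monic _ _ hmono
  have hdegprod : (∏ i : Fin (m+1), (X - C (x i))).natDegree = m + 1 := by
    rw [natDegree_prod_of_monic _ _ hmono]
    simp [natDegree_X_sub_C]
  have hPdeg : P.natDegree = m + 1 := by
    rw [hP, natDegree_C_mul hc.ne', hdegprod]
  have hPlead : P.coeff (m+1) = c := by
    rw [hP, coeff_C_mul]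
    have := hmonicprod.coeff_natDegree
    rw [hdegprod] at this
    rw [this, mul_one]
  have hP2 : P.coeff (m+2) = 0 := coeff_eq_zero_of_natDegree_lt (by omega)
  have hsan' : 0 < s - α - ((m:ℝ)+1) := by push_cast at hsan; linarith
  set β : ℝ := (s - α - ((m:ℝ)+1)) * c with hβdef
  have hβ : 0 < β := mul_pos hsan' hc
  -- Step B : degree and leading coefficient of Q
  have hQ' : Q = X * P.derivative - X^2 * P.derivative + (C (s-α) * (X * P) + C α * P) := by
    rw [hQ]; ring
  have hcoeffQ : Q.coeff (m+2) = β := by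
    have e1 : (X^2 * P.derivative).coeff (m + 2) = P.derivative.coeff m :=
      coeff_X_pow_mul P.derivative 2 m
    rw [hQ', coeff_add, coeff_sub, coeff_X_mul, e1, coeff_add, coeff_C_mul, coeff_C_mul,
      coeff_X_mul, coeff_derivative, coeff_derivative, hPlead, hP2, hβdef]
    push_cast
    ring
  have hQdegle : Q.natDegree ≤ m + 2 := by
    rw [hQ]
    apply le_trans (natDegree_add_le _ _)
    have d1 : (X * (1 - X) * P.derivative).natDegree ≤ m + 2 := by
      apply le_trans (natDegree_mul_le)
      have : (X * (1 - X) : ℝ[X]).natDegree ≤ 2 := by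
        apply le_trans (natDegree_mul_le)
        have : (1 - X : ℝ[X]).natDegree ≤ 1 := by
          apply le_trans (natDegree_sub_le _ _); simp
        simp only [natDegree_X]; omega
      have h2 : P.derivative.natDegree ≤ m := by
        have := natDegree_derivative_le P; omega
      omega
    have d2 : ((C (s - α) * X + C α) * P).natDegree ≤ m + 2 := by
      apply le_trans (natDegree_mul_le)
      have h1 : (C (s - α) * X : ℝ[X]).natDegree ≤ 1 :=
        le_trans (natDegree_C_mul_le _ _) (by simp)
      have h0 : (C α : ℝ[X]).natDegree = 0 := natDegree_C _
      have : (C (s - α) * X + C α : ℝ[X]).natDegree ≤ 1 :=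
        le_trans (natDegree_add_le _ _) (max_le h1 (by omega))
      omega
    omega
  have hQdeg : Q.natDegree = m + 2 :=
    natDegree_eq_of_le_of_coeff_ne_zero hQdegle (by rw [hcoeffQ]; exact hβ.ne')
  have hQlead : Q.leadingCoeff = β := by
    rw [leadingCoeff, hQdeg, hcoeffQ]
  have hQ0 : Q ≠ 0 := fun h => by
    rw [h] at hQlead; simp at hQlead; exact hβ.ne' hQlead.symm
  -- Step C : evaluations and signs
  have hPeval : ∀ j, P.eval (x j) = 0 := by
    intro j
    rw [hP]
    simp only [eval_mul, eval_C, eval_prod, eval_sub, eval_X]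
    rw [Finset.prod_eq_zero (Finset.mem_univ j) (by ring)]
    ring
  have hP'eval : ∀ j : Fin (m+1),
      P.derivative.eval (x j) = c * ∏ i ∈ Finset.univ.erase j, (x j - x i) := by
    intro j
    have hPsplit : P = (X - C (x j)) * (C c * ∏ i ∈ Finset.univ.erase j, (X - C (x i))) := by
      rw [hP, ← Finset.mul_prod_erase _ _ (Finset.mem_univ j)]
      ring
    rw [hPsplit, derivative_mul]
    simp [eval_prod]
  have hP'sign : ∀ j : Fin (m+1), 0 < (-1:ℝ)^(j:ℕ) * P.derivative.eval (x j) := by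
    intro j
    rw [hP'eval j]
    have hsplit : Finset.univ.erase j = Finset.Iio j ∪ Finset.Ioi j := by
      ext i
      simp only [Finset.mem_erase, Finset.mem_union, Finset.mem_Iio, Finset.mem_Ioi,
        Finset.mem_univ, and_true]
      exact ⟨fun h => Ne.lt_or_gt h, fun h => h.elim (fun h => h.ne) (fun h => h.ne')⟩
    have hdisj : Disjoint (Finset.Iio j) (Finset.Ioi j) :=
      (Finset.disjoint_Ioi_Iio j).symm
    rw [hsplit, Finset.prod_union hdisj]
    have hA : 0 < (-1:ℝ)^(j:ℕ) * ∏ i ∈ Finset.Iio j, (x j - x i) := by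
      have := aux_prod_neg_sign (Finset.Iio j) (fun i => x j - x i)
        (fun i hi => by
          have h1 : i < j := Finset.mem_Iio.mp hi
          have h2 := hxmono i j h1
          linarith)
      rwa [Fin.card_Iio] at this
    have hB : 0 < ∏ i ∈ Finset.Ioi j, (x j - x i) :=
      Finset.prod_pos (fun i hi => by
        have : j < i := Finset.mem_Ioi.mp hi
        have := hxmono j i this
        linarith)
    calc (0:ℝ) < c * ((-1:ℝ)^(j:ℕ) * ∏ i ∈ Finset.Iio j, (x j - x i))
          * ∏ i ∈ Finset.Ioi j, (x j - x i) := by positivity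
      _ = (-1:ℝ)^(j:ℕ) * (c * ((∏ i ∈ Finset.Iio j, (x j - x i))
          * ∏ i ∈ Finset.Ioi j, (x j - x i))) := by ring
  have hQsignx : ∀ j : Fin (m+1), 0 < (-1:ℝ)^((j:ℕ)+1) * Q.eval (x j) := by
    intro j
    have hQeval : Q.eval (x j) = (x j * (1 - x j)) * P.derivative.eval (x j) := by
      rw [hQ]
      simp only [eval_add, eval_mul, eval_sub, eval_one, eval_X, eval_C, hPeval j]
      ring
    have hneg : 0 < -(x j * (1 - x j)) := by nlinarith [hxneg j]
    calc (0:ℝ) < (-(x j * (1 - x j))) * ((-1:ℝ)^(j:ℕ) * P.derivative.eval (x j)) :=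
          mul_pos hneg (hP'sign j)
      _ = (-1:ℝ)^((j:ℕ)+1) * Q.eval (x j) := by rw [hQeval]; ring
  have hQ0pos : 0 < Q.eval 0 := by
    have hP0 : P.eval 0 = c * ∏ i, (0 - x i) := by
      rw [hP]; simp [eval_prod]
    have : 0 < P.eval 0 := by
      rw [hP0]
      have : 0 < ∏ i, (0 - x i) := Finset.prod_pos (fun i _ => by linarith [hxneg i])
      positivity
    rw [hQ]
    simp
    nlinarith
  -- Step D : existence of n roots by the intermediate value theorem
  set u : Fin (m+1) → ℝ := fun j =>
    if h : (j:ℕ) = 0 then 0 else x ⟨(j:ℕ)-1, lt_of_le_of_lt (Nat.sub_le _ _) j.isLt⟩ with hu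
  have hud0 : ∀ j : Fin (m+1), (j:ℕ) = 0 → u j = 0 := fun j h => dif_pos h
  have hud : ∀ (j : Fin (m+1)) (h : (j:ℕ) ≠ 0),
      u j = x ⟨(j:ℕ)-1, lt_of_le_of_lt (Nat.sub_le _ _) j.isLt⟩ := fun j h => dif_neg h
  have hxu : ∀ j, x j < u j := by
    intro j
    by_cases h : (j:ℕ) = 0
    · rw [hud0 j h]; exact hxneg j
    · rw [hud j h]
      exact hxmono _ _ (by rw [Fin.lt_def]; show (j:ℕ) - 1 < (j:ℕ); omega)
  have hQsignu : ∀ j : Fin (m+1), 0 < (-1:ℝ)^(j:ℕ) * Q.eval (u j) := by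
    intro j
    by_cases h : (j:ℕ) = 0
    · rw [hud0 j h, h]; simpa using hQ0pos
    · rw [hud j h]
      have := hQsignx ⟨(j:ℕ)-1, lt_of_le_of_lt (Nat.sub_le _ _) j.isLt⟩
      simp only at this
      rwa [show ((j:ℕ)-1)+1 = (j:ℕ) by omega] at this
  have hroot : ∀ j : Fin (m+1), ∃ z, x j < z ∧ z < u j ∧ Q.eval z = 0 := by
    intro j
    have hcont : ContinuousOn (fun t => Q.eval t) (Set.Icc (x j) (u j)) :=
      (Polynomial.continuous Q).continuousOn
    rcases Nat.even_or_odd (j:ℕ) with he | ho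
    · have e1 : ((-1:ℝ))^((j:ℕ)+1) = -1 := (he.add_one).neg_one_pow
      have e0 : ((-1:ℝ))^((j:ℕ)) = 1 := he.neg_one_pow
      have h1 : Q.eval (x j) < 0 := by have := hQsignx j; rw [e1] at this; linarith
      have h2 : 0 < Q.eval (u j) := by have := hQsignu j; rw [e0] at this; linarith
      have := intermediate_value_Ioo (le_of_lt (hxu j)) hcont
      obtain ⟨z, hz, hz0⟩ := this (Set.mem_Ioo.2 ⟨h1, h2⟩)
      exact ⟨z, hz.1, hz.2, hz0⟩
    · have e1 : ((-1:ℝ))^((j:ℕ)+1) = 1 := (ho.add_one).neg_one_pow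
      have e0 : ((-1:ℝ))^((j:ℕ)) = -1 := ho.neg_one_pow
      have h1 : 0 < Q.eval (x j) := by have := hQsignx j; rw [e1] at this; linarith
      have h2 : Q.eval (u j) < 0 := by have := hQsignu j; rw [e0] at this; linarith
      have := intermediate_value_Ioo' (le_of_lt (hxu j)) hcont
      obtain ⟨z, hz, hz0⟩ := this (Set.mem_Ioo.2 ⟨h2, h1⟩)
      exact ⟨z, hz.1, hz.2, hz0⟩
  choose y hy1 hy2 hy3 using hroot
  have hyu : ∀ j : Fin (m+1), (j:ℕ) ≠ 0 →
      y j < x ⟨(j:ℕ)-1, lt_of_le_of_lt (Nat.sub_le _ _) j.isLt⟩ := by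
    intro j hj
    have := hy2 j
    rwa [hud j hj] at this
  have hanti : StrictAnti y := by
    rw [Fin.strictAnti_iff_succ_lt]
    intro i
    have h1 : ((i.succ : Fin (m+1)) : ℕ) ≠ 0 := by simp [Fin.val_succ]
    have h2 := hyu i.succ h1
    have h3 : (⟨((i.succ : Fin (m+1)):ℕ)-1,
        lt_of_le_of_lt (Nat.sub_le _ _) (i.succ).isLt⟩ : Fin (m+1)) = i.castSucc :=
      Fin.ext (by simp [Fin.val_succ])
    rw [h3] at h2
    exact lt_trans h2 (hy1 i.castSucc)
  have hy0neg : y 0 < 0 := by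
    have := hy2 0
    rwa [hud0 0 rfl] at this
  -- Step E : divisibility and the last root
  set M : Multiset ℝ := Finset.univ.val.map y with hM
  have hMnodup : M.Nodup := Multiset.Nodup.map hanti.injective Finset.univ.nodup
  have hMle : M ≤ Q.roots := by
    rw [Multiset.le_iff_count]
    intro a
    by_cases ha : a ∈ M
    · rw [Multiset.count_eq_one_of_mem hMnodup ha]
      rw [Nat.one_le_iff_ne_zero, Ne, Multiset.count_eq_zero, not_not]
      rw [mem_roots hQ0]
      obtain ⟨j, _, rfl⟩ := Multiset.mem_map.mp ha
      exact hy3 j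
    · rw [Multiset.count_eq_zero_of_notMem ha]; omega
  have hdvd : (M.map fun a => X - C a).prod ∣ Q :=
    (Multiset.prod_X_sub_C_dvd_iff_le_roots hQ0 M).2 hMle
  set D : Polynomial ℝ := ∏ i : Fin (m+1), (X - C (y i)) with hD
  have hDM : (M.map fun a => X - C a).prod = D := by
    rw [hD, Finset.prod_eq_multiset_prod, hM, Multiset.map_map]
    rfl
  rw [hDM] at hdvd
  obtain ⟨L, hQDL⟩ := hdvd
  have hmono' : ∀ i ∈ Finset.univ, (X - C (y i)).Monic := fun i _ => monic_X_sub_C (y i)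
  have hDmonic : D.Monic := monic_prod_of_monic _ _ hmono'
  have hDdeg : D.natDegree = m + 1 := by
    rw [hD, natDegree_prod_of_monic _ _ hmono']; simp [natDegree_X_sub_C]
  have hL0 : L ≠ 0 := fun h => hQ0 (by rw [hQDL, h, mul_zero])
  have hLdeg : L.natDegree = 1 := by
    have := natDegree_mul (hDmonic.ne_zero) hL0
    rw [← hQDL, hQdeg, hDdeg] at this
    omega
  have hLlead : L.leadingCoeff = β := by
    have := leadingCoeff_mul D L
    rw [← hQDL, hQlead, hDmonic.leadingCoeff, one_mul] at this
    exact this.symm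
  have hLc1 : L.coeff 1 = β := by
    have : L.coeff 1 = L.leadingCoeff := by rw [leadingCoeff, hLdeg]
    rw [this, hLlead]
  set yn : ℝ := -(L.coeff 0) / β with hyn
  have hβyn : β * yn = -(L.coeff 0) := by
    rw [hyn, mul_comm, div_mul_cancel₀ _ hβ.ne']
  have hLfact : L = C β * (X - C yn) := by
    have h1 := eq_X_add_C_of_natDegree_le_one (le_of_eq hLdeg)
    rw [h1, hLc1, mul_sub, ← C_mul, hβyn, map_neg, sub_neg_eq_add]
  have hQfact : Q = C β * (D * (X - C yn)) := by rw [hQDL, hLfact]; ring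
  set lastj : Fin (m+1) := ⟨m, Nat.lt_succ_self m⟩ with hlastj
  have hxle : ∀ i : Fin (m+1), x lastj ≤ x i := by
    intro i
    have hle : i ≤ lastj := by
      rw [Fin.le_def, hlastj]
      simpa using Nat.lt_succ_iff.mp i.isLt
    rcases lt_or_eq_of_le hle with h | h
    · exact le_of_lt (hxmono i lastj h)
    · rw [h]
  have hprodneg : 0 < (-1:ℝ)^(m+1) * ∏ i : Fin (m+1), (x lastj - y i) := by
    have := aux_prod_neg_sign Finset.univ (fun i : Fin (m+1) => x lastj - y i)
      (fun i _ => by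
        have h1 := hxle i
        have h2 := hy1 i
        linarith)
    rwa [Finset.card_univ, Fintype.card_fin] at this
  have hevallast : Q.eval (x lastj) =
      β * ((∏ i : Fin (m+1), (x lastj - y i)) * (x lastj - yn)) := by
    rw [hQfact]
    simp [hD, eval_prod]
  have hynlt : yn < x lastj := by
    have h1 := hQsignx lastj
    rw [hevallast] at h1
    have hpn : 0 < (-1:ℝ)^((lastj:ℕ)+1) * ∏ i : Fin (m+1), (x lastj - y i) := hprodneg
    nlinarith [h1, mul_pos hβ hpn]
  -- Step F : assemble
  set xh : Fin (m+2) → ℝ := fun k =>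
    if h : (k:ℕ) < m+1 then y ⟨(k:ℕ), h⟩ else yn with hxh
  have hxhc : ∀ i : Fin (m+1), xh i.castSucc = y i := by
    intro i
    have h : ((i.castSucc : Fin (m+2)) : ℕ) < m + 1 := by simp; exact Nat.lt_succ_iff.mp i.isLt
    rw [show xh i.castSucc = y ⟨((i.castSucc : Fin (m+2)) : ℕ), h⟩ from dif_pos h]
    exact congrArg y (Fin.ext (by simp))
  have hxhlast : xh (Fin.last (m+1)) = yn := dif_neg (by simp)
  have hinter : ∀ i : Fin (m+1), xh i.succ < x i ∧ x i < xh i.castSucc := by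
    intro i
    constructor
    · by_cases h : ((i.succ : Fin (m+2)) : ℕ) < m + 1
      · rw [show xh i.succ = y ⟨((i.succ : Fin (m+2)) : ℕ), h⟩ from dif_pos h]
        have hne : ((⟨((i.succ : Fin (m+2)) : ℕ), h⟩ : Fin (m+1)) : ℕ) ≠ 0 := by
          simp [Fin.val_succ]
        have := hyu _ hne
        have heq : (⟨((⟨((i.succ : Fin (m+2)) : ℕ), h⟩ : Fin (m+1)) : ℕ) - 1,
            lt_of_le_of_lt (Nat.sub_le _ _) (Fin.isLt _)⟩ : Fin (m+1)) = i :=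
          Fin.ext (by simp [Fin.val_succ])
        rwa [heq] at this
      · have hvs : ((i.succ : Fin (m+2)) : ℕ) = (i:ℕ) + 1 := Fin.val_succ i
        rw [hvs] at h
        have him : (i:ℕ) = m := by have h2 := i.isLt; omega
        have hi : i.succ = Fin.last (m+1) :=
          Fin.ext (by rw [hvs, Fin.val_last, him])
        rw [hi, hxhlast]
        have hil : i = lastj := Fin.ext (by simpa [hlastj] using him)
        rw [hil]
        exact hynlt
    · rw [hxhc i]; exact hy1 i
  have hmono2 : ∀ i j : Fin (m+2), i < j → xh j < xh i := by
    have : StrictAnti xh := by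
      rw [Fin.strictAnti_iff_succ_lt]
      intro i
      exact lt_trans (hinter i).1 (hinter i).2
    exact fun i j h => this h
  refine ⟨hQdeg, xh, ?_, hmono2, ?_, hinter⟩
  · rw [hQlead, hQfact]
    congr 1
    rw [Fin.prod_univ_castSucc]
    congr 1
    · rw [hD]; exact Finset.prod_congr rfl (fun i _ => by rw [hxhc i])
    · rw [hxhlast]
  · have h0 : xh 0 = y 0 := by
      have h : ((0 : Fin (m+2)) : ℕ) < m + 1 := by simp
      rw [show xh 0 = y ⟨((0 : Fin (m+2)) : ℕ), h⟩ from dif_pos h]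
      congr 1
    exact h0 ▸ hy0neg
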